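/- The number of right special factors of the Thue–Morse sequence is: s(0)=1, s(n)=2 for 0<n≤2, s(n)=4 for 2·2^m < n ≤ 3·2^m, and s(n)=2 for 3·2^m < n ≤ 4·2^m (m ≥ 0). -/

import Mathlib

/-- The Thue–Morse sequence: parity of the number of 1s in binary (fixed point of
`0 ↦ 01`, `1 ↦ 10` starting from `0`). -/
def tm (n : ℕ) : Fin 2 := (Fin.ofNat 2 ((Nat.digits 2 n).count 1) : Fin 2)

/-- The set of length-`n` factors of the Thue–Morse sequence. -/
def tmFactors (n : ℕ) : Set (Fin n → Fin 2) :=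
  {u | ∃ i : ℕ, ∀ j : Fin n, tm (i + j) = u j}

/-- The set of right special factors of length `n` of the Thue–Morse sequence. -/
def tmRightSpecial (n : ℕ) : Set (Fin n → Fin 2) :=
  {u | u ∈ tmFactors n ∧ ∃ a b : Fin 2, a ≠ b ∧
    Fin.snoc u a ∈ tmFactors (n + 1) ∧ Fin.snoc u b ∈ tmFactors (n + 1)}

/-- The right special counting function of the Thue–Morse sequence. -/
noncomputable def tmS (n : ℕ) : ℕ := (tmRightSpecial n).ncard

/- ### Basic recurrences for `tm` -/

def tmAux : ℕ → ℕ → Fin 2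
  | 0, _ => 0
  | fuel+1, n => if n = 0 then 0 else tmAux fuel (n/2) + Fin.ofNat 2 (n % 2 : ℕ)

lemma tm_zero : tm 0 = 0 := by simp [tm]

lemma tm_two_mul (n : ℕ) : tm (2 * n) = tm n := by
  rcases Nat.eq_zero_or_pos n with h | h
  · simp [h]
  · unfold tm
    rw [Nat.digits_def' (by norm_num : 1 < 2) (by omega : 0 < 2 * n)]
    simp [Nat.mul_div_cancel_left _ (by norm_num : 0 < 2), Nat.mul_mod_right]

lemma tm_two_mul_add_one (n : ℕ) : tm (2 * n + 1) = tm n + 1 := by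
  unfold tm
  rw [Nat.digits_def' (by norm_num : 1 < 2) (by omega : 0 < 2 * n + 1)]
  have h1 : (2 * n + 1) % 2 = 1 := by omega
  have h2 : (2 * n + 1) / 2 = n := by omega
  rw [h1, h2, List.count_cons]
  simp [add_comm]
  ext; simp [Fin.val_add]; omega

lemma tm_eq_tmAux : ∀ fuel n, n < 2 ^ fuel → tm n = tmAux fuel n := by
  intro fuel
  induction fuel with
  | zero => intro n hn; interval_cases n; simp [tmAux, tm_zero]
  | succ f ih =>
    intro n hn
    rcases Nat.eq_zero_or_pos n with h | h
    · simp [h, tmAux, tm_zero]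
    · rw [tmAux, if_neg (by omega), ← ih (n/2) (by
        have : 2 ^ (f+1) = 2 * 2 ^ f := by ring
        omega)]
      rcases Nat.even_or_odd n with ⟨m, hm⟩ | ⟨m, hm⟩
      · subst hm
        rw [show m + m = 2 * m by ring, tm_two_mul]
        simp [Nat.mul_div_cancel_left _ (by norm_num : 0 < 2), Nat.mul_mod_right]
      · subst hm
        rw [tm_two_mul_add_one]
        have h1 : (2 * m + 1) % 2 = 1 := by omega
        have h2 : (2 * m + 1) / 2 = m := by omega
        rw [h1, h2]
        rfl

lemma tm_small {n : ℕ} (h : n < 32) : tm n = tmAux 5 n := tm_eq_tmAux 5 n (by omega)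

/- ### No three consecutive equal letters -/

lemma tm_no_three (n : ℕ) : tm n ≠ tm (n+1) ∨ tm (n+1) ≠ tm (n+2) := by
  rcases Nat.even_or_odd n with ⟨a, ha⟩ | ⟨a, ha⟩
  · left
    subst ha
    rw [show a + a = 2 * a by ring, tm_two_mul, tm_two_mul_add_one]
    generalize tm a = x
    revert x; decide
  · right
    subst ha
    rw [show 2*a+1+1 = 2*(a+1) by ring, show 2*a+1+2 = 2*(a+1)+1 by ring,
      tm_two_mul, tm_two_mul_add_one]
    generalize tm (a+1) = x
    revert x; decide

lemma no_three_occ {i : ℕ} (h0 : tm i = tm (i+1)) (h1 : tm (i+1) = tm (i+2)) : False := by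
  rcases tm_no_three i with h | h
  · exact h h0
  · exact h h1

/- ### Right special characterization -/

lemma snoc_occ {n : ℕ} {u : Fin n → Fin 2} {a : Fin 2} {i : ℕ} :
    (∀ j : Fin (n+1), tm (i + j) = (Fin.snoc u a : Fin (n+1) → Fin 2) j) ↔
      ((∀ j : Fin n, tm (i + j) = u j) ∧ tm (i + n) = a) := by
  constructor
  · intro h
    refine ⟨fun j => ?_, ?_⟩
    · have := h j.castSucc
      simpa using this
    · have := h (Fin.last n)
      simpa using this
  · rintro ⟨h1, h2⟩ j
    induction j using Fin.lastCases with
    | last => simpa using h2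
    | cast j => simpa using h1 j

lemma mem_RS_iff {n : ℕ} {u : Fin n → Fin 2} :
    u ∈ tmRightSpecial n ↔ ∃ i i' : ℕ,
      (∀ j : Fin n, tm (i + j) = u j) ∧ (∀ j : Fin n, tm (i' + j) = u j) ∧
        tm (i + n) ≠ tm (i' + n) := by
  constructor
  · rintro ⟨-, a, b, hab, ⟨i, hi⟩, ⟨i', hi'⟩⟩
    rw [snoc_occ] at hi hi'
    exact ⟨i, i', hi.1, hi'.1, by rw [hi.2, hi'.2]; exact hab⟩
  · rintro ⟨i, i', hi, hi', hne⟩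
    exact ⟨⟨i, hi⟩, tm (i+n), tm (i'+n), hne,
      ⟨i, snoc_occ.2 ⟨hi, rfl⟩⟩, ⟨i', snoc_occ.2 ⟨hi', rfl⟩⟩⟩

/- ### Synchronization -/

lemma no_mixed (a b : ℕ) (h : ∀ r : Fin 4, tm (2*a + (r:ℕ)) = tm (2*b+1 + (r:ℕ))) :
    False := by
  have e0 : tm (2*a + 0) = tm (2*b+1 + 0) := h ⟨0, by omega⟩
  have e1 : tm (2*a + 1) = tm (2*b+1 + 1) := h ⟨1, by omega⟩
  have e2 : tm (2*a + 2) = tm (2*b+1 + 2) := h ⟨2, by omega⟩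
  have e3 : tm (2*a + 3) = tm (2*b+1 + 3) := h ⟨3, by omega⟩
  rw [add_zero, add_zero, tm_two_mul, tm_two_mul_add_one] at e0
  rw [show 2*b+1+1 = 2*(b+1) by ring, tm_two_mul, tm_two_mul_add_one] at e1
  rw [show 2*a+2 = 2*(a+1) by ring, show 2*b+1+2 = 2*(b+1)+1 by ring,
    tm_two_mul, tm_two_mul_add_one] at e2
  rw [show 2*a+3 = 2*(a+1)+1 by ring, show 2*b+1+3 = 2*(b+2) by ring,
    tm_two_mul_add_one, tm_two_mul] at e3
  have h3 := tm_no_three b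
  generalize tm a = x0 at e0 e1
  generalize tm (a+1) = x1 at e2 e3
  generalize tm b = y0 at e0 h3
  generalize tm (b+1) = y1 at e1 e2 h3
  generalize tm (b+2) = y2 at e3 h3
  revert e0 e1 e2 e3 h3
  revert x0 x1 y0 y1 y2
  decide

lemma tm_sync {n : ℕ} (hn : 4 ≤ n) {p q : ℕ} {w : Fin n → Fin 2}
    (hp : ∀ j : Fin n, tm (p + j) = w j) (hq : ∀ j : Fin n, tm (q + j) = w j) :
    p % 2 = q % 2 := by
  have key : ∀ p' q' : ℕ, p' % 2 = 0 → q' % 2 = 1 →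
      (∀ j : Fin n, tm (p' + j) = w j) → (∀ j : Fin n, tm (q' + j) = w j) → False := by
    intro p' q' hp2 hq2 hp' hq'
    apply no_mixed (p'/2) (q'/2)
    intro r
    have hr : (r:ℕ) < n := by omega
    have h1 : tm (p' + (r:ℕ)) = w ⟨(r:ℕ), hr⟩ := hp' ⟨(r:ℕ), hr⟩
    have h2 : tm (q' + (r:ℕ)) = w ⟨(r:ℕ), hr⟩ := hq' ⟨(r:ℕ), hr⟩
    rw [show 2*(p'/2) + (r:ℕ) = p' + (r:ℕ) by omega,
      show 2*(q'/2)+1 + (r:ℕ) = q' + (r:ℕ) by omega]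
    exact h1.trans h2.symm
  rcases Nat.mod_two_eq_zero_or_one p with h1 | h1 <;>
    rcases Nat.mod_two_eq_zero_or_one q with h2 | h2
  · omega
  · exact absurd (key p q h1 h2 hp hq) (by simp)
  · exact absurd (key q p h2 h1 hq hp) (by simp)
  · omega

/- ### The substitution maps -/

def ext2 {k : ℕ} (v : Fin k → Fin 2) : Fin (2*k) → Fin 2 :=
  fun j => v ⟨(j:ℕ)/2, by omega⟩ + Fin.ofNat 2 ((j:ℕ) % 2 : ℕ)

def extO {k : ℕ} (u : Fin (k+1) → Fin 2) : Fin (2*k+1) → Fin 2 :=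
  fun j => u ⟨((j:ℕ)+1)/2, by omega⟩ + Fin.ofNat 2 (((j:ℕ)+1) % 2 : ℕ)

lemma ext2_inj {k : ℕ} : Function.Injective (@ext2 k) := by
  intro v v' h
  funext m
  have h2 := congrFun h ⟨2*(m:ℕ), by omega⟩
  simp only [ext2] at h2
  simp only [show (2*(m:ℕ))/2 = (m:ℕ) by omega, show (2*(m:ℕ))%2 = 0 by omega] at h2
  simpa using h2

lemma extO_inj {k : ℕ} : Function.Injective (@extO k) := by
  intro u u' h
  funext m
  rcases Nat.eq_zero_or_pos (m:ℕ) with h0 | h0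
  · have h2 := congrFun h ⟨0, by omega⟩
    simp only [extO] at h2
    simp only [show ((0:ℕ)+1)/2 = 0 by omega, show ((0:ℕ)+1)%2 = 1 by omega] at h2
    have : m = ⟨0, by omega⟩ := by ext; exact h0
    rw [this]
    simpa using add_right_cancel h2
  · have h2 := congrFun h ⟨2*(m:ℕ)-1, by omega⟩
    simp only [extO] at h2
    simp only [show ((2*(m:ℕ)-1)+1)/2 = (m:ℕ) by omega,
      show ((2*(m:ℕ)-1)+1)%2 = 0 by omega] at h2
    simpa using h2

lemma occ_ext2 {k i : ℕ} {v : Fin k → Fin 2} (h : ∀ j : Fin k, tm (i + j) = v j) :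
    ∀ j : Fin (2*k), tm (2*i + j) = ext2 v j := by
  intro j
  simp only [ext2]
  rcases Nat.even_or_odd (j:ℕ) with ⟨m, hm⟩ | ⟨m, hm⟩
  · have hmk : m < k := by omega
    have hv : tm (i + m) = v ⟨m, hmk⟩ := h ⟨m, hmk⟩
    simp only [show (j:ℕ)/2 = m by omega, show (j:ℕ)%2 = 0 by omega]
    rw [show 2*i + (j:ℕ) = 2*(i+m) by omega, tm_two_mul]
    simpa using hv
  · have hmk : m < k := by omega
    have hv : tm (i + m) = v ⟨m, hmk⟩ := h ⟨m, hmk⟩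
    simp only [show (j:ℕ)/2 = m by omega, show (j:ℕ)%2 = 1 by omega]
    rw [show 2*i + (j:ℕ) = 2*(i+m)+1 by omega, tm_two_mul_add_one]
    simpa using hv

lemma occ_extO {k i : ℕ} {u : Fin (k+1) → Fin 2} (h : ∀ j : Fin (k+1), tm (i + j) = u j) :
    ∀ j : Fin (2*k+1), tm (2*i+1 + j) = extO u j := by
  intro j
  simp only [extO]
  rcases Nat.even_or_odd (j:ℕ) with ⟨m, hm⟩ | ⟨m, hm⟩
  · have hmk : m < k + 1 := by omega
    have hv : tm (i + m) = u ⟨m, hmk⟩ := h ⟨m, hmk⟩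
    simp only [show ((j:ℕ)+1)/2 = m by omega, show ((j:ℕ)+1)%2 = 1 by omega]
    rw [show 2*i+1 + (j:ℕ) = 2*(i+m)+1 by omega, tm_two_mul_add_one]
    simpa using hv
  · have hmk : m + 1 < k + 1 := by omega
    have hv : tm (i + (m+1)) = u ⟨m+1, hmk⟩ := h ⟨m+1, hmk⟩
    simp only [show ((j:ℕ)+1)/2 = m+1 by omega, show ((j:ℕ)+1)%2 = 0 by omega]
    rw [show 2*i+1 + (j:ℕ) = 2*(i+(m+1)) by omega, tm_two_mul]
    simpa using hv

/- ### Transfer of right special factors -/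


set_option maxHeartbeats 1000000 in
lemma RS_even {k : ℕ} (hk : 2 ≤ k) :
    tmRightSpecial (2*k) = ext2 '' tmRightSpecial k := by
  have hlt : 2*k-1 < 2*k := by omega
  ext w
  constructor
  · intro hw
    rw [mem_RS_iff] at hw
    obtain ⟨p, q, hp, hq, hne⟩ := hw
    have hpar := tm_sync (by omega) hp hq
    rcases Nat.mod_two_eq_zero_or_one p with h1 | h1
    · -- both occurrences at even positions
      have h2 : q % 2 = 0 := by omega
      refine ⟨fun m => tm (p/2 + (m:ℕ)), mem_RS_iff.2 ⟨p/2, q/2, fun m => rfl,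
        fun m => ?_, ?_⟩, ?_⟩
      · have hm2 : 2*(m:ℕ) < 2*k := by omega
        have h3 : tm (p + 2*(m:ℕ)) = w ⟨2*(m:ℕ), hm2⟩ := hp ⟨2*(m:ℕ), hm2⟩
        have h4 : tm (q + 2*(m:ℕ)) = w ⟨2*(m:ℕ), hm2⟩ := hq ⟨2*(m:ℕ), hm2⟩
        rw [show p + 2*(m:ℕ) = 2*(p/2 + (m:ℕ)) by omega, tm_two_mul] at h3
        rw [show q + 2*(m:ℕ) = 2*(q/2 + (m:ℕ)) by omega, tm_two_mul] at h4
        exact h4.trans h3.symm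
      · rw [show p/2 + k = (p + 2*k)/2 by omega, show q/2 + k = (q + 2*k)/2 by omega,
          ← tm_two_mul ((p + 2*k)/2), ← tm_two_mul ((q + 2*k)/2),
          show 2*((p + 2*k)/2) = p + 2*k by omega, show 2*((q + 2*k)/2) = q + 2*k by omega]
        exact hne
      · funext j
        rw [← hp j]
        simp only [ext2]
        rcases Nat.even_or_odd (j:ℕ) with ⟨m, hm⟩ | ⟨m, hm⟩
        · simp only [show (j:ℕ)/2 = m by omega, show (j:ℕ)%2 = 0 by omega]
          rw [show p + (j:ℕ) = 2*(p/2 + m) by omega, tm_two_mul]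
          simp
        · simp only [show (j:ℕ)/2 = m by omega, show (j:ℕ)%2 = 1 by omega]
          rw [show p + (j:ℕ) = 2*(p/2 + m)+1 by omega, tm_two_mul_add_one]
          simp
    · -- both odd: impossible (follower forced)
      have h2 : q % 2 = 1 := by omega
      exfalso
      have e1 : tm (p + (2*k-1)) = w ⟨2*k-1, hlt⟩ := hp ⟨2*k-1, hlt⟩
      have e2 : tm (q + (2*k-1)) = w ⟨2*k-1, hlt⟩ := hq ⟨2*k-1, hlt⟩
      have f1 : tm (p + 2*k) = w ⟨2*k-1, hlt⟩ + 1 := by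
        rw [show p + 2*k = 2*((p + (2*k-1))/2)+1 by omega, tm_two_mul_add_one,
          ← tm_two_mul ((p + (2*k-1))/2), show 2*((p + (2*k-1))/2) = p + (2*k-1) by omega, e1]
      have f2 : tm (q + 2*k) = w ⟨2*k-1, hlt⟩ + 1 := by
        rw [show q + 2*k = 2*((q + (2*k-1))/2)+1 by omega, tm_two_mul_add_one,
          ← tm_two_mul ((q + (2*k-1))/2), show 2*((q + (2*k-1))/2) = q + (2*k-1) by omega, e2]
      rw [f1, f2] at hne
      exact hne rfl
  · rintro ⟨v, hv, rfl⟩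
    rw [mem_RS_iff] at hv
    obtain ⟨i, i', h1, h2, h3⟩ := hv
    refine mem_RS_iff.2 ⟨2*i, 2*i', occ_ext2 h1, occ_ext2 h2, ?_⟩
    rw [show 2*i + 2*k = 2*(i+k) by ring, show 2*i' + 2*k = 2*(i'+k) by ring,
      tm_two_mul, tm_two_mul]
    exact h3

set_option maxHeartbeats 1000000 in
lemma RS_odd {k : ℕ} (hk : 2 ≤ k) :
    tmRightSpecial (2*k+1) = extO '' tmRightSpecial (k+1) := by
  have hlt : 2*k < 2*k+1 := by omega
  ext w
  constructor
  · intro hw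
    rw [mem_RS_iff] at hw
    obtain ⟨p, q, hp, hq, hne⟩ := hw
    have hpar := tm_sync (n := 2*k+1) (by omega) hp hq
    rcases Nat.mod_two_eq_zero_or_one p with h1 | h1
    · -- both even: impossible (follower forced)
      have h2 : q % 2 = 0 := by omega
      exfalso
      have e1 : tm (p + 2*k) = w ⟨2*k, hlt⟩ := hp ⟨2*k, hlt⟩
      have e2 : tm (q + 2*k) = w ⟨2*k, hlt⟩ := hq ⟨2*k, hlt⟩
      have f1 : tm (p + (2*k+1)) = w ⟨2*k, hlt⟩ + 1 := by
        rw [show p + (2*k+1) = 2*((p + 2*k)/2)+1 by omega, tm_two_mul_add_one,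
          ← tm_two_mul ((p + 2*k)/2), show 2*((p + 2*k)/2) = p + 2*k by omega, e1]
      have f2 : tm (q + (2*k+1)) = w ⟨2*k, hlt⟩ + 1 := by
        rw [show q + (2*k+1) = 2*((q + 2*k)/2)+1 by omega, tm_two_mul_add_one,
          ← tm_two_mul ((q + 2*k)/2), show 2*((q + 2*k)/2) = q + 2*k by omega, e2]
      rw [f1, f2] at hne
      exact hne rfl
    · -- both odd
      have h2 : q % 2 = 1 := by omega
      refine ⟨fun m => tm (p/2 + (m:ℕ)), mem_RS_iff.2 ⟨p/2, q/2, fun m => rfl,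
        fun m => ?_, ?_⟩, ?_⟩
      · rcases Nat.eq_zero_or_pos (m:ℕ) with h0 | h0
        · have hz : 0 < 2*k+1 := by omega
          have e1 : tm (p + 0) = w ⟨0, hz⟩ := hp ⟨0, hz⟩
          have e2 : tm (q + 0) = w ⟨0, hz⟩ := hq ⟨0, hz⟩
          rw [add_zero, show p = 2*(p/2)+1 by omega, tm_two_mul_add_one] at e1
          rw [add_zero, show q = 2*(q/2)+1 by omega, tm_two_mul_add_one] at e2
          have h5 : tm (q/2) + 1 = tm (p/2) + 1 := e2.trans e1.symm
          rw [h0, add_zero, add_zero]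
          exact add_right_cancel h5
        · have hm2 : 2*(m:ℕ)-1 < 2*k+1 := by omega
          have e1 : tm (p + (2*(m:ℕ)-1)) = w ⟨2*(m:ℕ)-1, hm2⟩ := hp ⟨2*(m:ℕ)-1, hm2⟩
          have e2 : tm (q + (2*(m:ℕ)-1)) = w ⟨2*(m:ℕ)-1, hm2⟩ := hq ⟨2*(m:ℕ)-1, hm2⟩
          rw [show p + (2*(m:ℕ)-1) = 2*(p/2 + (m:ℕ)) by omega, tm_two_mul] at e1
          rw [show q + (2*(m:ℕ)-1) = 2*(q/2 + (m:ℕ)) by omega, tm_two_mul] at e2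
          exact e2.trans e1.symm
      · rw [show p/2 + (k+1) = (p + (2*k+1))/2 by omega,
          show q/2 + (k+1) = (q + (2*k+1))/2 by omega,
          ← tm_two_mul ((p + (2*k+1))/2), ← tm_two_mul ((q + (2*k+1))/2),
          show 2*((p + (2*k+1))/2) = p + (2*k+1) by omega,
          show 2*((q + (2*k+1))/2) = q + (2*k+1) by omega]
        exact hne
      · funext j
        rw [← hp j]
        simp only [extO]
        rcases Nat.even_or_odd (j:ℕ) with ⟨m, hm⟩ | ⟨m, hm⟩
        · simp only [show ((j:ℕ)+1)/2 = m by omega, show ((j:ℕ)+1)%2 = 1 by omega]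
          rw [show p + (j:ℕ) = 2*(p/2 + m)+1 by omega, tm_two_mul_add_one]
          simp
        · simp only [show ((j:ℕ)+1)/2 = m+1 by omega, show ((j:ℕ)+1)%2 = 0 by omega]
          rw [show p + (j:ℕ) = 2*(p/2 + (m+1)) by omega, tm_two_mul]
          simp
  · rintro ⟨u, hu, rfl⟩
    rw [mem_RS_iff] at hu
    obtain ⟨i, i', h1, h2, h3⟩ := hu
    refine mem_RS_iff.2 ⟨2*i+1, 2*i'+1, occ_extO h1, occ_extO h2, ?_⟩
    rw [show 2*i+1 + (2*k+1) = 2*(i+(k+1)) by ring,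
      show 2*i'+1 + (2*k+1) = 2*(i'+(k+1)) by ring, tm_two_mul, tm_two_mul]
    exact h3

/- ### The halving recursion for `tmS` -/

lemma tmS_even {k : ℕ} (hk : 2 ≤ k) : tmS (2*k) = tmS k := by
  rw [tmS, tmS, RS_even hk, Set.ncard_image_of_injective _ ext2_inj]

lemma tmS_odd {k : ℕ} (hk : 2 ≤ k) : tmS (2*k+1) = tmS (k+1) := by
  rw [tmS, tmS, RS_odd hk, Set.ncard_image_of_injective _ extO_inj]

lemma tmS_half {n : ℕ} (hn : 4 ≤ n) : tmS n = tmS ((n+1)/2) := by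
  rcases Nat.even_or_odd n with ⟨k, hk⟩ | ⟨k, hk⟩
  · subst hk
    rw [show k + k = 2*k by ring, tmS_even (by omega), show (2*k+1)/2 = k by omega]
  · subst hk
    rw [tmS_odd (by omega), show (2*k+1+1)/2 = k+1 by omega]

/- ### Base cases -/

lemma occ_small {n i : ℕ} (u : Fin n → Fin 2) (hi : i + n < 32)
    (h : ∀ j : Fin n, tmAux 5 (i + j) = u j) : ∀ j : Fin n, tm (i + j) = u j := by
  intro j
  rw [tm_small (by omega)]
  exact h j

lemma follow_small {i i' : ℕ} (hi : i < 32) (hi' : i' < 32)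
    (h : tmAux 5 i ≠ tmAux 5 i') : tm i ≠ tm i' := by
  rw [tm_small hi, tm_small hi']
  exact h

lemma tmS_zero : tmS 0 = 1 := by
  have : tmRightSpecial 0 = {![]} := by
    ext u
    simp only [Set.mem_singleton_iff]
    constructor
    · intro _
      funext j
      exact j.elim0
    · intro _
      refine mem_RS_iff.2 ⟨0, 1, fun j => j.elim0, fun j => j.elim0, ?_⟩
      exact follow_small (by norm_num) (by norm_num) (by decide)
  rw [tmS, this, Set.ncard_singleton]

lemma tmS_one : tmS 1 = 2 := by
  have : tmRightSpecial 1 = ↑({![0], ![1]} : Finset (Fin 1 → Fin 2)) := by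
    ext u
    constructor
    · intro _
      rcases (by decide : ∀ v : Fin 1 → Fin 2, v = ![0] ∨ v = ![1]) u with h | h <;>
        simp [h]
    · intro hu
      rcases (by decide : ∀ v : Fin 1 → Fin 2, v = ![0] ∨ v = ![1]) u with h | h <;> subst h
      · exact mem_RS_iff.2 ⟨5, 3, occ_small _ (by norm_num) (by decide),
          occ_small _ (by norm_num) (by decide),
          follow_small (by norm_num) (by norm_num) (by decide)⟩
      · exact mem_RS_iff.2 ⟨1, 2, occ_small _ (by norm_num) (by decide),
          occ_small _ (by norm_num) (by decide),
          follow_small (by norm_num) (by norm_num) (by decide)⟩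
  rw [tmS, this, Set.ncard_coe_finset]
  decide

lemma tmS_two : tmS 2 = 2 := by
  have : tmRightSpecial 2 = ↑({![0,1], ![1,0]} : Finset (Fin 2 → Fin 2)) := by
    ext u
    constructor
    · intro hu
      obtain ⟨i, i', hocc, hocc', hne⟩ := mem_RS_iff.1 hu
      rcases (by decide : ∀ v : Fin 2 → Fin 2,
          v = ![0,0] ∨ v = ![0,1] ∨ v = ![1,0] ∨ v = ![1,1]) u with h | h | h | h
      · exfalso
        subst h
        have c0 : tm (i + 0) = 0 := hocc 0
        have c1 : tm (i + 1) = 0 := hocc 1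
        have c0' : tm (i' + 0) = 0 := hocc' 0
        have c1' : tm (i' + 1) = 0 := hocc' 1
        rcases (by decide : ∀ x y : Fin 2, x ≠ y → x = 0 ∨ y = 0) _ _ hne with h2 | h2
        · exact no_three_occ (i := i) (by rw [add_zero] at c0; rw [c0, c1])
            (by rw [c1, show i + 2 = i + 2 from rfl, h2])
        · exact no_three_occ (i := i') (by rw [add_zero] at c0'; rw [c0', c1'])
            (by rw [c1', h2])
      · subst h; simp
      · subst h; simp
      · exfalso
        subst h
        have c0 : tm (i + 0) = 1 := hocc 0
        have c1 : tm (i + 1) = 1 := hocc 1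
        have c0' : tm (i' + 0) = 1 := hocc' 0
        have c1' : tm (i' + 1) = 1 := hocc' 1
        rcases (by decide : ∀ x y : Fin 2, x ≠ y → x = 1 ∨ y = 1) _ _ hne with h2 | h2
        · exact no_three_occ (i := i) (by rw [add_zero] at c0; rw [c0, c1])
            (by rw [c1, h2])
        · exact no_three_occ (i := i') (by rw [add_zero] at c0'; rw [c0', c1'])
            (by rw [c1', h2])
    · intro hu
      rcases (by decide : ∀ v : Fin 2 → Fin 2, v ∈ ({![0,1], ![1,0]} : Finset (Fin 2 → Fin 2)) →
          v = ![0,1] ∨ v = ![1,0]) u hu with h | h <;> subst h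
      · exact mem_RS_iff.2 ⟨3, 12, occ_small _ (by norm_num) (by decide),
          occ_small _ (by norm_num) (by decide),
          follow_small (by norm_num) (by norm_num) (by decide)⟩
      · exact mem_RS_iff.2 ⟨4, 11, occ_small _ (by norm_num) (by decide),
          occ_small _ (by norm_num) (by decide),
          follow_small (by norm_num) (by norm_num) (by decide)⟩
  rw [tmS, this, Set.ncard_coe_finset]
  decide

lemma tmS_three : tmS 3 = 4 := by
  have key : tmRightSpecial 3 =
      ↑({![1,1,0], ![0,0,1], ![0,1,0], ![1,0,1]} : Finset (Fin 3 → Fin 2)) := by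
    ext u
    constructor
    · intro hu
      obtain ⟨i, i', hocc, hocc', hne⟩ := mem_RS_iff.1 hu
      rcases (by decide : ∀ v : Fin 3 → Fin 2,
          v = ![0,0,0] ∨ v = ![0,0,1] ∨ v = ![0,1,0] ∨ v = ![0,1,1] ∨
          v = ![1,0,0] ∨ v = ![1,0,1] ∨ v = ![1,1,0] ∨ v = ![1,1,1]) u
        with h | h | h | h | h | h | h | h <;> subst h
      · -- 000 : not even a factor
        exfalso
        have c0 : tm (i + 0) = 0 := hocc 0
        have c1 : tm (i + 1) = 0 := hocc 1
        have c2 : tm (i + 2) = 0 := hocc 2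
        rw [add_zero] at c0
        exact no_three_occ (by rw [c0, c1]) (by rw [c1, c2])
      · simp
      · simp
      · -- 011 : follower 1 gives 111
        exfalso
        rcases (by decide : ∀ x y : Fin 2, x ≠ y → x = 1 ∨ y = 1) _ _ hne with h2 | h2
        · have c1 : tm (i + 1) = 1 := hocc 1
          have c2 : tm (i + 2) = 1 := hocc 2
          exact no_three_occ (i := i + 1) (by rw [show i+1+1 = i+2 from rfl, c1, c2])
            (by rw [show i+1+1 = i+2 from rfl, show i+1+2 = i+3 from rfl, c2, h2])
        · have c1 : tm (i' + 1) = 1 := hocc' 1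
          have c2 : tm (i' + 2) = 1 := hocc' 2
          exact no_three_occ (i := i' + 1) (by rw [show i'+1+1 = i'+2 from rfl, c1, c2])
            (by rw [show i'+1+1 = i'+2 from rfl, show i'+1+2 = i'+3 from rfl, c2, h2])
      · -- 100 : follower 0 gives 000
        exfalso
        rcases (by decide : ∀ x y : Fin 2, x ≠ y → x = 0 ∨ y = 0) _ _ hne with h2 | h2
        · have c1 : tm (i + 1) = 0 := hocc 1
          have c2 : tm (i + 2) = 0 := hocc 2
          exact no_three_occ (i := i + 1) (by rw [show i+1+1 = i+2 from rfl, c1, c2])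
            (by rw [show i+1+1 = i+2 from rfl, show i+1+2 = i+3 from rfl, c2, h2])
        · have c1 : tm (i' + 1) = 0 := hocc' 1
          have c2 : tm (i' + 2) = 0 := hocc' 2
          exact no_three_occ (i := i' + 1) (by rw [show i'+1+1 = i'+2 from rfl, c1, c2])
            (by rw [show i'+1+1 = i'+2 from rfl, show i'+1+2 = i'+3 from rfl, c2, h2])
      · simp
      · simp
      · -- 111 : not even a factor
        exfalso
        have c0 : tm (i + 0) = 1 := hocc 0
        have c1 : tm (i + 1) = 1 := hocc 1
        have c2 : tm (i + 2) = 1 := hocc 2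
        rw [add_zero] at c0
        exact no_three_occ (by rw [c0, c1]) (by rw [c1, c2])
    · intro hu
      rcases (by decide : ∀ v : Fin 3 → Fin 2,
          v ∈ ({![1,1,0], ![0,0,1], ![0,1,0], ![1,0,1]} : Finset (Fin 3 → Fin 2)) →
          v = ![1,1,0] ∨ v = ![0,0,1] ∨ v = ![0,1,0] ∨ v = ![1,0,1]) u hu
        with h | h | h | h <;> subst h
      · exact mem_RS_iff.2 ⟨1, 21, occ_small _ (by norm_num) (by decide),
          occ_small _ (by norm_num) (by decide),
          follow_small (by norm_num) (by norm_num) (by decide)⟩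
      · exact mem_RS_iff.2 ⟨5, 9, occ_small _ (by norm_num) (by decide),
          occ_small _ (by norm_num) (by decide),
          follow_small (by norm_num) (by norm_num) (by decide)⟩
      · exact mem_RS_iff.2 ⟨3, 10, occ_small _ (by norm_num) (by decide),
          occ_small _ (by norm_num) (by decide),
          follow_small (by norm_num) (by norm_num) (by decide)⟩
      · exact mem_RS_iff.2 ⟨2, 11, occ_small _ (by norm_num) (by decide),
          occ_small _ (by norm_num) (by decide),
          follow_small (by norm_num) (by norm_num) (by decide)⟩
  rw [tmS, key, Set.ncard_coe_finset]
  decide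

lemma tmS_four : tmS 4 = 2 := by
  rw [tmS_half (by norm_num)]
  norm_num [tmS_two]

/- ### Main theorem -/

/-- The right special counting function of the Thue–Morse sequence:
`s(0)=1`, `s(n)=2` for `0 < n ≤ 2`, `s(n)=4` for `2·2^m < n ≤ 3·2^m`, and
`s(n)=2` for `3·2^m < n ≤ 4·2^m`. -/
theorem tm_rightSpecial_count :
    tmS 0 = 1 ∧
    (∀ n : ℕ, 0 < n → n ≤ 2 → tmS n = 2) ∧
    (∀ m n : ℕ, 2 * 2 ^ m < n → n ≤ 3 * 2 ^ m → tmS n = 4) ∧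
    (∀ m n : ℕ, 3 * 2 ^ m < n → n ≤ 4 * 2 ^ m → tmS n = 2) := by
  have h4 : ∀ m n : ℕ, 2 * 2 ^ m < n → n ≤ 3 * 2 ^ m → tmS n = 4 := by
    intro m
    induction m with
    | zero =>
      intro n h1 h2
      have : n = 3 := by norm_num at h1 h2; omega
      rw [this, tmS_three]
    | succ m ih =>
      intro n h1 h2
      have hK : 1 ≤ 2 ^ m := Nat.one_le_two_pow
      rw [pow_succ] at h1 h2
      rw [tmS_half (by omega)]
      exact ih _ (by omega) (by omega)
  have h2 : ∀ m n : ℕ, 3 * 2 ^ m < n → n ≤ 4 * 2 ^ m → tmS n = 2 := by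
    intro m
    induction m with
    | zero =>
      intro n h1 h2
      have : n = 4 := by norm_num at h1 h2; omega
      rw [this, tmS_four]
    | succ m ih =>
      intro n h1 h2
      have hK : 1 ≤ 2 ^ m := Nat.one_le_two_pow
      rw [pow_succ] at h1 h2
      rw [tmS_half (by omega)]
      exact ih _ (by omega) (by omega)
  refine ⟨tmS_zero, ?_, h4, h2⟩
  intro n h1 h2
  interval_cases n
  · exact tmS_one
  · exact tmS_two
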